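/- Let S₁, S₂ ⊆ ℝ be finite sets with 0 ∈ S₁ ∩ S₂ and let Γ = S₁ × S₂ ⊆ ℝ². Suppose u is a nonnegative real-valued function on the set of affine lines in ℝ² not passing through the origin, supported on a finite set of s lines, such that for every point p ∈ Γ \ {(0,0)} the sum of u(ℓ) over lines ℓ containing p is at least 1. Then for every integer k ≥ 1 there exists a k-cover of Γ of cardinality at most k · Σ_ℓ u(ℓ) + s; in particular cov_k(Γ) ≤ k · Σ_ℓ u(ℓ) + s. -/

import Mathlib

open scoped Classical

/-- An affine line in `ℝ²`, given by the equation `a * x + b * y = c` with `(a, b) ≠ (0, 0)`. -/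
structure Line2 where
  a : ℝ
  b : ℝ
  c : ℝ
  nondeg : a ≠ 0 ∨ b ≠ 0

/-- Membership of a point on a line. -/
def Line2.Mem (l : Line2) (p : ℝ × ℝ) : Prop :=
  l.a * p.1 + l.b * p.2 = l.c

/-- `L` is a `k`-cover of `Γ`: a multiset of lines, none through the origin, such that
every point of `Γ` other than the origin lies on at least `k` lines (with multiplicity). -/
def IsKCover (Γ : Set (ℝ × ℝ)) (k : ℕ) (L : Multiset Line2) : Prop :=
  (∀ l ∈ L, ¬ l.Mem (0, 0)) ∧
    ∀ p ∈ Γ, p ≠ (0, 0) → k ≤ (L.filter (fun l => l.Mem p)).card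

/-- The minimum cardinality of a `k`-cover of `Γ`. -/
noncomputable def cov (Γ : Set (ℝ × ℝ)) (k : ℕ) : ℕ :=
  sInf {m | ∃ L : Multiset Line2, IsKCover Γ k L ∧ Multiset.card L = m}

lemma my_filter_sum {α β : Type*} (P : β → Prop) [DecidablePred P] (s : Finset α)
    (f : α → Multiset β) :
    Multiset.filter P (∑ i ∈ s, f i) = ∑ i ∈ s, Multiset.filter P (f i) := by
  classical
  induction s using Finset.induction_on with
  | empty => simp
  | insert _ _ h ih => simp [Finset.sum_insert h, Multiset.filter_add, ih]

lemma my_card_sum {α β : Type*} (s : Finset α) (f : α → Multiset β) :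
    Multiset.card (∑ i ∈ s, f i) = ∑ i ∈ s, Multiset.card (f i) := by
  classical
  induction s using Finset.induction_on with
  | empty => simp
  | insert _ _ h ih => simp [Finset.sum_insert h, ih]

lemma my_filter_replicate {β : Type*} (P : β → Prop) [DecidablePred P] (n : ℕ) (a : β) :
    Multiset.filter P (Multiset.replicate n a) =
      if P a then Multiset.replicate n a else 0 := by
  split_ifs with h
  · exact Multiset.filter_eq_self.2 fun b hb => (Multiset.eq_of_mem_replicate hb) ▸ h
  · exact Multiset.filter_eq_nil.2 fun b hb => (Multiset.eq_of_mem_replicate hb) ▸ h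

theorem stmt10 (S₁ S₂ : Finset ℝ)
    (h0₁ : (0 : ℝ) ∈ S₁) (h0₂ : (0 : ℝ) ∈ S₂)
    (u : Line2 → ℝ) (hu0 : ∀ l, 0 ≤ u l)
    (huorig : ∀ l : Line2, u l ≠ 0 → ¬ l.Mem (0, 0))
    (F : Finset Line2) (s : ℕ) (hFcard : F.card = s)
    (husupp : ∀ l : Line2, l ∉ F → u l = 0)
    (hpoint : ∀ p ∈ (S₁ ×ˢ S₂ : Finset (ℝ × ℝ)), p ≠ (0, 0) →
      1 ≤ ∑ l ∈ F, (if l.Mem p then u l else 0))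
    (k : ℕ) (hk : 1 ≤ k) :
    (∃ L : Multiset Line2, IsKCover (↑(S₁ ×ˢ S₂)) k L ∧
        (Multiset.card L : ℝ) ≤ (k : ℝ) * ∑ l ∈ F, u l + (s : ℝ)) ∧
      (cov (↑(S₁ ×ˢ S₂)) k : ℝ) ≤ (k : ℝ) * ∑ l ∈ F, u l + (s : ℝ) := by
  classical
  set L : Multiset Line2 := ∑ l ∈ F, Multiset.replicate ⌈(k : ℝ) * u l⌉₊ l with hL
  have hmemL : ∀ l' ∈ L, l' ∈ F ∧ 0 < ⌈(k : ℝ) * u l'⌉₊ := by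
    intro l' hl'
    rw [hL, Multiset.mem_sum] at hl'
    obtain ⟨l, hlF, hl'rep⟩ := hl'
    have := Multiset.eq_of_mem_replicate hl'rep
    subst this
    exact ⟨hlF, Nat.pos_of_ne_zero (Multiset.mem_replicate.1 hl'rep).1⟩
  -- no line through the origin
  have hOrig : ∀ l ∈ L, ¬ l.Mem (0, 0) := by
    intro l hl
    obtain ⟨hlF, hpos⟩ := hmemL l hl
    apply huorig
    intro hu
    simp [hu] at hpos
  -- coverage
  have hCover : ∀ p ∈ (↑(S₁ ×ˢ S₂) : Set (ℝ × ℝ)), p ≠ (0, 0) →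
      k ≤ (L.filter (fun l => l.Mem p)).card := by
    intro p hp hp0
    have hp' : p ∈ (S₁ ×ˢ S₂ : Finset (ℝ × ℝ)) := by exact_mod_cast hp
    have h1 := hpoint p hp' hp0
    have hcard : ((L.filter (fun l => l.Mem p)).card : ℝ) =
        ∑ l ∈ F, (if l.Mem p then (⌈(k : ℝ) * u l⌉₊ : ℝ) else 0) := by
      rw [hL, my_filter_sum, my_card_sum]
      push_cast
      congr 1
      ext l
      rw [my_filter_replicate]
      split_ifs <;> simp
    have : (k : ℝ) ≤ ((L.filter (fun l => l.Mem p)).card : ℝ) := by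
      rw [hcard]
      calc (k : ℝ) = (k : ℝ) * 1 := (mul_one _).symm
        _ ≤ (k : ℝ) * ∑ l ∈ F, (if l.Mem p then u l else 0) :=
            mul_le_mul_of_nonneg_left h1 (Nat.cast_nonneg k)
        _ = ∑ l ∈ F, (if l.Mem p then (k : ℝ) * u l else 0) := by
            rw [Finset.mul_sum]; exact Finset.sum_congr rfl fun l _ => by
              split_ifs <;> simp
        _ ≤ ∑ l ∈ F, (if l.Mem p then (⌈(k : ℝ) * u l⌉₊ : ℝ) else 0) := by
            refine Finset.sum_le_sum fun l _ => ?_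
            split_ifs
            · exact Nat.le_ceil _
            · exact le_refl 0
    exact_mod_cast this
  have hKCover : IsKCover (↑(S₁ ×ˢ S₂)) k L := ⟨hOrig, hCover⟩
  have hcardL : (Multiset.card L : ℝ) ≤ (k : ℝ) * ∑ l ∈ F, u l + (s : ℝ) := by
    have : (Multiset.card L : ℝ) = ∑ l ∈ F, (⌈(k : ℝ) * u l⌉₊ : ℝ) := by
      rw [hL, my_card_sum]; push_cast; simp
    rw [this]
    calc ∑ l ∈ F, (⌈(k : ℝ) * u l⌉₊ : ℝ) ≤ ∑ l ∈ F, ((k : ℝ) * u l + 1) := by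
          refine Finset.sum_le_sum fun l _ => ?_
          exact (Nat.ceil_lt_add_one (mul_nonneg (Nat.cast_nonneg k) (hu0 l))).le
      _ = (k : ℝ) * ∑ l ∈ F, u l + (s : ℝ) := by
          rw [Finset.sum_add_distrib, ← Finset.mul_sum]
          simp [hFcard]
  refine ⟨⟨L, hKCover, hcardL⟩, ?_⟩
  have hcov : cov (↑(S₁ ×ˢ S₂)) k ≤ Multiset.card L :=
    Nat.sInf_le ⟨L, hKCover, rfl⟩
  exact le_trans (by exact_mod_cast hcov) hcardL
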